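/- If C is a complete admissible uniform clutter, then the simplicial complex generated by the edges of C (the complex whose faces are the subsets of edges of C, so whose facets are precisely the edges of C) is pure shellable. -/

import Mathlib

variable {V : Type} [Fintype V] [DecidableEq V]

/-- A clutter: a family of finsets (edges), none of which contains another. -/
def IsClutter (E : Set (Finset V)) : Prop :=
  ∀ e ∈ E, ∀ f ∈ E, e ⊆ f → e = f

/-- A vertex cover: a set of vertices meeting every edge. -/
def IsVertexCover (E : Set (Finset V)) (C : Finset V) : Prop :=
  ∀ e ∈ E, (e ∩ C).Nonempty

/-- A minimal vertex cover. -/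
def IsMinimalVertexCover (E : Set (Finset V)) (C : Finset V) : Prop :=
  IsVertexCover E C ∧ ∀ D ⊂ C, ¬ IsVertexCover E D

/-- The covering number: minimum cardinality of a vertex cover. -/
noncomputable def coveringNumber (E : Set (Finset V)) : ℕ :=
  sInf {n : ℕ | ∃ C : Finset V, IsVertexCover E C ∧ C.card = n}

/-- Unmixed: all minimal vertex covers have the same cardinality. -/
def Unmixed (E : Set (Finset V)) : Prop :=
  ∀ C D : Finset V, IsMinimalVertexCover E C → IsMinimalVertexCover E D →
    C.card = D.card

/-- A matching: a set of pairwise disjoint edges. -/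
def IsMatching (E : Set (Finset V)) (M : Finset (Finset V)) : Prop :=
  ↑M ⊆ E ∧ (M : Set (Finset V)).Pairwise Disjoint

/-- The König property: the maximum size of a matching equals the covering number. -/
def HasKonigProperty (E : Set (Finset V)) : Prop :=
  (∃ M : Finset (Finset V), IsMatching E M ∧ M.card = coveringNumber E) ∧
  ∀ M : Finset (Finset V), IsMatching E M → M.card ≤ coveringNumber E

/-- A perfect matching of König type: pairwise disjoint edges `em 0, …, em (g-1)`
whose union is the whole vertex set, where `g` is the covering number. -/
def IsPerfectMatchingKT (E : Set (Finset V)) {g : ℕ} (em : Fin g → Finset V) : Prop :=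
  (∀ i, em i ∈ E) ∧ (∀ i j, i ≠ j → Disjoint (em i) (em j)) ∧
  (∀ x : V, ∃ i, x ∈ em i) ∧ g = coveringNumber E

/-- An independent set: contains no edge. -/
def IsIndependentSet (E : Set (Finset V)) (F : Finset V) : Prop :=
  ∀ e ∈ E, ¬ e ⊆ F

/-- A facet of the independence complex: a maximal independent set. -/
def IsFacet (E : Set (Finset V)) (F : Finset V) : Prop :=
  IsIndependentSet E F ∧ ∀ G : Finset V, IsIndependentSet E G → F ⊆ G → F = G

/-- The set of facets of the independence complex of a clutter. -/
def cFacets (E : Set (Finset V)) : Set (Finset V) := {F | IsFacet E F}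

/-- `F : Fin s → Finset V` is a shelling order of the family of facets `Fac`. -/
def IsShelling {s : ℕ} (Fac : Set (Finset V)) (F : Fin s → Finset V) : Prop :=
  Function.Injective F ∧ (∀ G : Finset V, G ∈ Fac ↔ ∃ i, F i = G) ∧
  ∀ i j : Fin s, i < j →
    ∃ v ∈ F j \ F i, ∃ l : Fin s, l < j ∧ F j \ F l = {v}

/-- A family of facets is shellable if it admits a shelling order. -/
def Shellable (Fac : Set (Finset V)) : Prop :=
  ∃ (s : ℕ) (F : Fin s → Finset V), IsShelling Fac F

/-- A family of facets is pure if all its members have the same cardinality. -/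
def PureFamily (Fac : Set (Finset V)) : Prop :=
  ∀ F ∈ Fac, ∀ G ∈ Fac, F.card = G.card

/-- Pure shellable: pure and shellable. -/
def PureShellable (Fac : Set (Finset V)) : Prop :=
  PureFamily Fac ∧ Shellable Fac

/-- A free vertex: a vertex belonging to exactly one edge. -/
def HasFreeVertex (E : Set (Finset V)) : Prop :=
  ∃ x : V, ∃ e ∈ E, x ∈ e ∧ ∀ f ∈ E, x ∈ f → f = e

/-- A cycle of length `r`: `r` distinct vertices and `r` distinct edges such that each
of the vertices lies in exactly two of the edges and each of the edges contains exactly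
two of the vertices. -/
def HasCycleOfLength (E : Set (Finset V)) (r : ℕ) : Prop :=
  ∃ (v : Fin r → V) (f : Fin r → Finset V),
    Function.Injective v ∧ Function.Injective f ∧ (∀ j, f j ∈ E) ∧
    (∀ i : Fin r, (Finset.univ.filter (fun j => v i ∈ f j)).card = 2) ∧
    (∀ j : Fin r, (Finset.univ.filter (fun i => v i ∈ f j)).card = 2)

/-- A partition of the vertex set into finsets indexed by `Fin m`. -/
def IsPartitionF {m : ℕ} (P : Fin m → Finset V) : Prop :=
  (∀ i j, i ≠ j → Disjoint (P i) (P j)) ∧ ∀ x : V, ∃ i, x ∈ P i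

/-- An admissible set with respect to the color classes `Xc 0, …, Xc (d-1)` and the
matching classes `em 0, …, em (g-1)`: it meets each color class at most once, it meets
precisely the first `e.card` color classes, and the matching indices of its vertices
are nondecreasing along the color classes. -/
def IsAdmissibleSet {d g : ℕ} (Xc : Fin d → Finset V) (em : Fin g → Finset V)
    (e : Finset V) : Prop :=
  (∀ i, (e ∩ Xc i).card ≤ 1) ∧
  (∀ i : Fin d, ((i : ℕ) < e.card ↔ (e ∩ Xc i).Nonempty)) ∧
  (∀ (i i' : Fin d) (j j' : Fin g) (x y : V),
    x ∈ e ∩ Xc i → y ∈ e ∩ Xc i' → x ∈ em j → y ∈ em j' → i ≤ i' → j ≤ j')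

/-- An admissible clutter: the `em i` are admissible edges and all other edges are
admissible sets not contained in any `em i`. -/
def IsAdmissibleClutter {d g : ℕ} (Xc : Fin d → Finset V) (em : Fin g → Finset V)
    (E : Set (Finset V)) : Prop :=
  IsClutter E ∧ (∀ i, em i ∈ E) ∧ (∀ i, IsAdmissibleSet Xc em (em i)) ∧
  ∀ f ∈ E, (∀ i, f ≠ em i) → IsAdmissibleSet Xc em f ∧ ∀ i, ¬ f ⊆ em i

/-- The complete admissible clutter: the `em i` together with all maximal admissible
sets containing no `em i`. -/
def completeAdmissibleClutter {d g : ℕ} (Xc : Fin d → Finset V)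
    (em : Fin g → Finset V) : Set (Finset V) :=
  Set.range em ∪
    {e | IsAdmissibleSet Xc em e ∧ (∀ i, ¬ em i ⊆ e) ∧
      ∀ e', IsAdmissibleSet Xc em e' → e ⊆ e' → e = e'}

/-- The edge set of the complete admissible uniform clutter: all maximal admissible
sets. -/
def maxAdmissible {d g : ℕ} (Xc : Fin d → Finset V)
    (em : Fin g → Finset V) : Set (Finset V) :=
  {e | IsAdmissibleSet Xc em e ∧ ∀ e', IsAdmissibleSet Xc em e' → e ⊆ e' → e = e'}

set_option linter.unusedSectionVars false

namespace CAU

noncomputable instance lexLO {d g : ℕ} : LinearOrder (Lex (∀ _ : Fin d, Fin g)) :=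
  @Pi.Lex.linearOrder (Fin d) (fun _ => Fin g) Fin.instLinearOrder
    (IsWellFounded.mk (Finite.wellFounded_of_trans_of_irrefl _)) (fun _ => Fin.instLinearOrder)

variable {d g : ℕ} {Xc : Fin d → Finset V} {em : Fin g → Finset V}

theorem part_unique {m : ℕ} {P : Fin m → Finset V} (hP : IsPartitionF P) {x : V}
    {i j : Fin m} (hi : x ∈ P i) (hj : x ∈ P j) : i = j := by
  by_contra h
  exact Finset.disjoint_left.mp (hP.1 i j h) hi hj

noncomputable def vx (hcompat : ∀ i j, (em i ∩ Xc j).card = 1) (i : Fin g) (j : Fin d) : V :=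
  (Finset.card_eq_one.mp (hcompat i j)).choose

theorem vx_spec (hcompat : ∀ i j, (em i ∩ Xc j).card = 1) (i : Fin g) (j : Fin d) :
    em i ∩ Xc j = {vx hcompat i j} :=
  (Finset.card_eq_one.mp (hcompat i j)).choose_spec

theorem vx_mem_em (hcompat : ∀ i j, (em i ∩ Xc j).card = 1) (i : Fin g) (j : Fin d) :
    vx hcompat i j ∈ em i := by
  have : vx hcompat i j ∈ em i ∩ Xc j := by rw [vx_spec]; exact Finset.mem_singleton_self _
  exact (Finset.mem_inter.mp this).1

theorem vx_mem_Xc (hcompat : ∀ i j, (em i ∩ Xc j).card = 1) (i : Fin g) (j : Fin d) :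
    vx hcompat i j ∈ Xc j := by
  have : vx hcompat i j ∈ em i ∩ Xc j := by rw [vx_spec]; exact Finset.mem_singleton_self _
  exact (Finset.mem_inter.mp this).2

theorem vx_eq (hcompat : ∀ i j, (em i ∩ Xc j).card = 1) {x : V} {i : Fin g} {j : Fin d}
    (h1 : x ∈ em i) (h2 : x ∈ Xc j) : x = vx hcompat i j := by
  have : x ∈ em i ∩ Xc j := Finset.mem_inter.mpr ⟨h1, h2⟩
  rw [vx_spec hcompat] at this
  exact Finset.mem_singleton.mp this

theorem vx_inj_m (hem : IsPartitionF em) (hcompat : ∀ i j, (em i ∩ Xc j).card = 1)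
    {i i' : Fin g} {j : Fin d} (h : vx hcompat i j = vx hcompat i' j) : i = i' := by
  have h1 := vx_mem_em hcompat i j
  rw [h] at h1
  exact part_unique hem h1 (vx_mem_em hcompat i' j)

noncomputable def Ed (hcompat : ∀ i j, (em i ∩ Xc j).card = 1) (f : Fin d → Fin g) : Finset V :=
  Finset.univ.image (fun j => vx hcompat (f j) j)

theorem mem_Ed (hcompat : ∀ i j, (em i ∩ Xc j).card = 1) {f : Fin d → Fin g} {x : V} :
    x ∈ Ed hcompat f ↔ ∃ j, vx hcompat (f j) j = x := by
  simp [Ed]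

theorem Ed_inter (hXc : IsPartitionF Xc) (hcompat : ∀ i j, (em i ∩ Xc j).card = 1)
    (f : Fin d → Fin g) (i : Fin d) : Ed hcompat f ∩ Xc i = {vx hcompat (f i) i} := by
  ext x
  simp only [Finset.mem_inter, mem_Ed hcompat, Finset.mem_singleton]
  constructor
  · rintro ⟨⟨j, rfl⟩, hx⟩
    have : j = i := part_unique hXc (vx_mem_Xc hcompat (f j) j) hx
    subst this; rfl
  · rintro rfl
    exact ⟨⟨i, rfl⟩, vx_mem_Xc hcompat (f i) i⟩

theorem card_Ed (hXc : IsPartitionF Xc) (hcompat : ∀ i j, (em i ∩ Xc j).card = 1)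
    (f : Fin d → Fin g) : (Ed hcompat f).card = d := by
  rw [Ed, Finset.card_image_of_injective _ ?_, Finset.card_univ, Fintype.card_fin]
  intro j j' h
  have h' : vx hcompat (f j) j = vx hcompat (f j') j' := h
  have h1 := vx_mem_Xc hcompat (f j) j
  rw [h'] at h1
  exact part_unique hXc h1 (vx_mem_Xc hcompat (f j') j')

theorem Ed_inj (hXc : IsPartitionF Xc) (hem : IsPartitionF em)
    (hcompat : ∀ i j, (em i ∩ Xc j).card = 1) {f f' : Fin d → Fin g}
    (h : Ed hcompat f = Ed hcompat f') : f = f' := by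
  funext j
  have h1 : vx hcompat (f j) j ∈ Ed hcompat f' := by
    rw [← h]; exact (mem_Ed hcompat).mpr ⟨j, rfl⟩
  have h2 : vx hcompat (f j) j ∈ Ed hcompat f' ∩ Xc j :=
    Finset.mem_inter.mpr ⟨h1, vx_mem_Xc hcompat (f j) j⟩
  rw [Ed_inter hXc hcompat f' j] at h2
  exact vx_inj_m hem hcompat (Finset.mem_singleton.mp h2)

theorem Ed_adm (hXc : IsPartitionF Xc) (hem : IsPartitionF em)
    (hcompat : ∀ i j, (em i ∩ Xc j).card = 1) {f : Fin d → Fin g} (hf : Monotone f) :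
    IsAdmissibleSet Xc em (Ed hcompat f) := by
  refine ⟨fun i => ?_, fun i => ?_, ?_⟩
  · rw [Ed_inter hXc hcompat f i]; simp
  · rw [card_Ed hXc hcompat f, Ed_inter hXc hcompat f i]
    simp [i.isLt]
  · intro i i' j j' x y hx hy hxj hyj' hii'
    rw [Ed_inter hXc hcompat f i, Finset.mem_singleton] at hx
    rw [Ed_inter hXc hcompat f i', Finset.mem_singleton] at hy
    subst hx; subst hy
    have h1 : j = f i := part_unique hem hxj (vx_mem_em hcompat (f i) i)
    have h2 : j' = f i' := part_unique hem hyj' (vx_mem_em hcompat (f i') i')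
    rw [h1, h2]
    exact hf hii'

theorem adm_card_le (hXc : IsPartitionF Xc) {e : Finset V}
    (he : IsAdmissibleSet Xc em e) : e.card ≤ d := by
  classical
  choose cIdx hcIdx using hXc.2
  calc e.card ≤ (Finset.univ : Finset (Fin d)).card := by
        apply Finset.card_le_card_of_injOn cIdx (fun x _ => Finset.mem_univ _)
        intro x hx y hy hxy
        have h1 : x ∈ e ∩ Xc (cIdx x) := Finset.mem_inter.mpr ⟨hx, hcIdx x⟩
        have h2 : y ∈ e ∩ Xc (cIdx x) := Finset.mem_inter.mpr ⟨hy, hxy ▸ hcIdx y⟩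
        exact Finset.card_le_one.mp (he.1 (cIdx x)) x h1 y h2
    _ = d := by simp

theorem Ed_max (hXc : IsPartitionF Xc) (hem : IsPartitionF em)
    (hcompat : ∀ i j, (em i ∩ Xc j).card = 1) {f : Fin d → Fin g} (hf : Monotone f) :
    Ed hcompat f ∈ maxAdmissible Xc em := by
  refine ⟨Ed_adm hXc hem hcompat hf, fun e' he' hsub => ?_⟩
  exact Finset.eq_of_subset_of_card_le hsub
    (by rw [card_Ed hXc hcompat f]; exact adm_card_le hXc he')

theorem max_eq_Ed (hXc : IsPartitionF Xc) (hem : IsPartitionF em)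
    (hcompat : ∀ i j, (em i ∩ Xc j).card = 1) (hV : Nonempty V) {e : Finset V}
    (he : e ∈ maxAdmissible Xc em) :
    ∃ f : Fin d → Fin g, Monotone f ∧ Ed hcompat f = e := by
  classical
  obtain ⟨x0⟩ := hV
  obtain ⟨i0, -⟩ := hem.2 x0
  have hg : 0 < g := i0.pos
  have hcard : e.card = d := by
    rcases lt_or_eq_of_le (adm_card_le hXc he.1) with hk | hk
    · exfalso
      set k : Fin d := ⟨e.card, hk⟩ with hkdef
      set gm : Fin g := ⟨g - 1, by omega⟩ with hgmdef
      have hgm : ∀ j : Fin g, j ≤ gm := fun j => by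
        rw [Fin.le_def]
        have := j.isLt
        simp only [hgmdef]
        omega
      set v := vx hcompat gm k with hv
      have hvXc : v ∈ Xc k := vx_mem_Xc hcompat gm k
      have hvem : v ∈ em gm := vx_mem_em hcompat gm k
      have hek : e ∩ Xc k = ∅ := by
        rw [← Finset.not_nonempty_iff_eq_empty]
        intro hne
        have h2 := (he.1.2.1 k).mpr hne
        simp only [hkdef] at h2
        omega
      have hvnot : v ∉ e := by
        intro hv'
        have : v ∈ e ∩ Xc k := Finset.mem_inter.mpr ⟨hv', hvXc⟩
        simp [hek] at this
      have hinter_ne : ∀ i : Fin d, i ≠ k → insert v e ∩ Xc i = e ∩ Xc i := by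
        intro i hi
        apply Finset.insert_inter_of_notMem
        intro hvi
        exact hi (part_unique hXc hvi hvXc)
      have hinter_k : insert v e ∩ Xc k = {v} := by
        rw [Finset.insert_inter_of_mem hvXc, hek]
        rfl
      have hcard' : (insert v e).card = e.card + 1 := Finset.card_insert_of_notMem hvnot
      have hadm : IsAdmissibleSet Xc em (insert v e) := by
        refine ⟨fun i => ?_, fun i => ?_, ?_⟩
        · by_cases hi : i = k
          · subst hi; rw [hinter_k]; simp
          · rw [hinter_ne i hi]; exact he.1.1 i
        · rw [hcard']
          by_cases hi : i = k
          · subst hi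
            rw [hinter_k]
            simp only [hkdef]
            constructor
            · intro _; exact Finset.singleton_nonempty _
            · intro _; omega
          · rw [hinter_ne i hi]
            have h2 := he.1.2.1 i
            have hik : (i : ℕ) ≠ e.card := by
              intro h
              exact hi (Fin.ext (by simp [hkdef, h]))
            constructor
            · intro hlt; exact h2.mp (by omega)
            · intro hne
              have := h2.mpr hne
              omega
        · intro i i' j j' x y hx hy hxj hyj' hii'
          rw [Finset.mem_inter, Finset.mem_insert] at hx hy
          obtain ⟨hx1 | hx1, hx2⟩ := hx
          · subst hx1
            have hik : i = k := part_unique hXc hx2 hvXc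
            obtain ⟨hy1 | hy1, hy2⟩ := hy
            · subst hy1
              have hj : j = gm := part_unique hem hxj hvem
              have hj' : j' = gm := part_unique hem hyj' hvem
              rw [hj, hj']
            · exfalso
              have hi' : (i' : ℕ) < e.card :=
                (he.1.2.1 i').mpr ⟨y, Finset.mem_inter.mpr ⟨hy1, hy2⟩⟩
              have hle : (i : ℕ) ≤ (i' : ℕ) := hii'
              have : (i : ℕ) = e.card := by rw [hik]
              omega
          · obtain ⟨hy1 | hy1, hy2⟩ := hy
            · subst hy1
              have hj' : j' = gm := part_unique hem hyj' hvem
              rw [hj']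
              exact hgm j
            · exact he.1.2.2 i i' j j' x y (Finset.mem_inter.mpr ⟨hx1, hx2⟩)
                (Finset.mem_inter.mpr ⟨hy1, hy2⟩) hxj hyj' hii'
      have heq := he.2 (insert v e) hadm (Finset.subset_insert v e)
      rw [← heq] at hcard'
      omega
    · exact hk
  have hne : ∀ i : Fin d, (e ∩ Xc i).Nonempty := fun i =>
    (he.1.2.1 i).mp (by rw [hcard]; exact i.isLt)
  choose p hp using hne
  choose f hf using fun i => hem.2 (p i)
  have hpe : ∀ i, p i ∈ e := fun i => (Finset.mem_inter.mp (hp i)).1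
  have hpX : ∀ i, p i ∈ Xc i := fun i => (Finset.mem_inter.mp (hp i)).2
  have hpv : ∀ i, p i = vx hcompat (f i) i := fun i => vx_eq hcompat (hf i) (hpX i)
  refine ⟨f, ?_, ?_⟩
  · intro i i' h
    exact he.1.2.2 i i' (f i) (f i') (p i) (p i') (hp i) (hp i') (hf i) (hf i') h
  · apply Finset.eq_of_subset_of_card_le
    · intro x hx
      obtain ⟨i, rfl⟩ := (mem_Ed hcompat).mp hx
      rw [← hpv i]
      exact hpe i
    · rw [card_Ed hXc hcompat f, hcard]

end CAU

/-- The simplicial complex generated by the edges of a complete admissible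
uniform clutter (whose facets are precisely the edges) is pure shellable. -/
theorem complete_admissible_uniform_edges_pure_shellable
    {d g : ℕ} (Xc : Fin d → Finset V) (em : Fin g → Finset V)
    (hXc : IsPartitionF Xc) (hem : IsPartitionF em)
    (hcompat : ∀ i j, (em i ∩ Xc j).card = 1) :
    PureShellable (maxAdmissible Xc em) := by
  classical
  rcases isEmpty_or_nonempty V with hV | hV
  · have hempty : ∀ e : Finset V, e = ∅ := fun e =>
      Finset.eq_empty_of_forall_notMem (fun x _ => hV.false x)
    have hadm : IsAdmissibleSet Xc em (∅ : Finset V) := by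
      refine ⟨fun i => by simp, fun i => by simp, ?_⟩
      intro i i' j j' x y hx
      simp at hx
    have hmax : maxAdmissible Xc em = {∅} := by
      ext e
      simp only [maxAdmissible, Set.mem_setOf_eq, Set.mem_singleton_iff]
      constructor
      · intro _; exact hempty e
      · rintro rfl
        exact ⟨hadm, fun e' _ _ => (hempty e').symm⟩
    rw [hmax]
    refine ⟨fun F hF G hG => by simp_all, 1, fun _ => ∅, ?_, ?_, ?_⟩
    · intro a b _; exact Subsingleton.elim a b
    · intro G
      simp only [Set.mem_singleton_iff]
      constructor
      · rintro rfl; exact ⟨0, rfl⟩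
      · rintro ⟨i, rfl⟩; rfl
    · intro i j hij
      rw [Fin.lt_def] at hij
      have := i.isLt; have := j.isLt
      omega
  · set S : Finset (Lex (∀ _ : Fin d, Fin g)) :=
      Finset.univ.filter (fun f => Monotone (ofLex f)) with hS
    let σ := S.orderIsoOfFin rfl
    have hmemS : ∀ k, Monotone (ofLex ((σ k) : Lex (∀ _ : Fin d, Fin g))) := fun k =>
      (Finset.mem_filter.mp (σ k).2).2
    refine ⟨?_, S.card, fun k => CAU.Ed hcompat (ofLex ((σ k) : Lex (∀ _ : Fin d, Fin g))), ?_, ?_, ?_⟩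
    · intro F hF G hG
      obtain ⟨f, -, rfl⟩ := CAU.max_eq_Ed hXc hem hcompat hV hF
      obtain ⟨f', -, rfl⟩ := CAU.max_eq_Ed hXc hem hcompat hV hG
      rw [CAU.card_Ed hXc hcompat f, CAU.card_Ed hXc hcompat f']
    · intro k k' h
      have h1 := CAU.Ed_inj hXc hem hcompat h
      exact σ.injective (Subtype.ext (ofLex.injective h1))
    · intro G
      constructor
      · intro hG
        obtain ⟨f, hfm, rfl⟩ := CAU.max_eq_Ed hXc hem hcompat hV hG
        have hfS : toLex f ∈ S := Finset.mem_filter.mpr ⟨Finset.mem_univ _, hfm⟩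
        refine ⟨σ.symm ⟨toLex f, hfS⟩, ?_⟩
        show CAU.Ed hcompat
            (ofLex ((σ (σ.symm ⟨toLex f, hfS⟩)) : Lex (∀ _ : Fin d, Fin g))) = CAU.Ed hcompat f
        rw [σ.apply_symm_apply]
        rfl
      · rintro ⟨k, rfl⟩
        exact CAU.Ed_max hXc hem hcompat (hmemS k)
    · intro k k' hkk'
      set a : Fin d → Fin g := ofLex ((σ k) : Lex (∀ _ : Fin d, Fin g)) with ha
      set b : Fin d → Fin g := ofLex ((σ k') : Lex (∀ _ : Fin d, Fin g)) with hb
      have ham : Monotone a := hmemS k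
      have hbm : Monotone b := hmemS k'
      have hlt : ((σ k) : Lex (∀ _ : Fin d, Fin g)) < ((σ k') : Lex (∀ _ : Fin d, Fin g)) :=
        Subtype.coe_lt_coe.mpr (σ.strictMono hkk')
      have hlt' : ∃ p : Fin d, (∀ q, q < p → a q = b q) ∧ a p < b p := hlt
      obtain ⟨p, hpre, hplt⟩ := hlt'
      set v := CAU.vx hcompat (b p) p with hv
      have hvXc : v ∈ Xc p := CAU.vx_mem_Xc hcompat (b p) p
      have hvnotEd : ∀ f : Fin d → Fin g, f p ≠ b p → v ∉ CAU.Ed hcompat f := by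
        intro f hfp hvin
        obtain ⟨q, hq⟩ := (CAU.mem_Ed hcompat).mp hvin
        have hqmem : v ∈ Xc q := hq ▸ CAU.vx_mem_Xc hcompat (f q) q
        have hqp : q = p := CAU.part_unique hXc hqmem hvXc
        subst hqp
        rw [hv] at hq
        exact hfp (CAU.vx_inj_m hem hcompat hq)
      have hvb : v ∈ CAU.Ed hcompat b := (CAU.mem_Ed hcompat).mpr ⟨p, hv.symm⟩
      have hva : v ∉ CAU.Ed hcompat a := hvnotEd a (ne_of_lt hplt)
      set c : Fin d → Fin g := Function.update b p (a p) with hc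
      have hcp : c p = a p := Function.update_self p (a p) b
      have hcq : ∀ q, q ≠ p → c q = b q := fun q hq => Function.update_of_ne hq _ _
      have hcm : Monotone c := by
        intro q q' hqq'
        by_cases h1 : q = p <;> by_cases h2 : q' = p
      -- cases
        · rw [h1, h2]
        · rw [h1, hcp, hcq q' h2]
          have hpq' : p < q' := lt_of_le_of_ne (by rw [← h1]; exact hqq') (Ne.symm h2)
          exact le_trans (le_of_lt hplt) (hbm (le_of_lt hpq'))
        · rw [h2, hcq q h1, hcp]
          have hqp : q < p := lt_of_le_of_ne (by rw [← h2]; exact hqq') h1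
          rw [← hpre q hqp]
          exact ham (le_of_lt hqp)
        · rw [hcq q h1, hcq q' h2]
          exact hbm hqq'
      have hclt0 : ∃ p0 : Fin d, (∀ q, q < p0 → c q = b q) ∧ c p0 < b p0 :=
        ⟨p, fun q hq => hcq q (ne_of_lt hq), by rw [hcp]; exact hplt⟩
      have hclt : (toLex c : Lex (∀ _ : Fin d, Fin g)) < toLex b := hclt0
      have hcS : toLex c ∈ S := Finset.mem_filter.mpr ⟨Finset.mem_univ _, hcm⟩
      set l := σ.symm ⟨toLex c, hcS⟩ with hl
      have hσl : σ l = ⟨toLex c, hcS⟩ := σ.apply_symm_apply _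
      have hlk' : l < k' := by
        rw [← σ.lt_iff_lt, hσl]
        exact Subtype.mk_lt_mk.mpr hclt
      refine ⟨v, Finset.mem_sdiff.mpr ⟨hvb, hva⟩, l, hlk', ?_⟩
      have hFl : CAU.Ed hcompat (ofLex ((σ l) : Lex (∀ _ : Fin d, Fin g))) = CAU.Ed hcompat c := by
        rw [hσl]
        rfl
      show CAU.Ed hcompat b \ CAU.Ed hcompat (ofLex ((σ l) : Lex (∀ _ : Fin d, Fin g))) = {v}
      rw [hFl]
      ext x
      simp only [Finset.mem_sdiff, Finset.mem_singleton]
      constructor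
      · rintro ⟨hxb, hxc⟩
        obtain ⟨q, rfl⟩ := (CAU.mem_Ed hcompat).mp hxb
        by_cases hq : q = p
        · subst hq; exact hv.symm
        · exfalso
          apply hxc
          refine (CAU.mem_Ed hcompat).mpr ⟨q, ?_⟩
          rw [hcq q hq]
      · rintro rfl
        refine ⟨hvb, hvnotEd c ?_⟩
        rw [hcp]
        exact ne_of_lt hplt
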